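/- Fix d ≥ 1 and ρ̄ ≥ 0. For each integer l ≥ 1 let (φ^l_i)_{i∈ℕ} be an orthonormal family in L²(ℝ^d, ℂ) with each φ^l_i also in L¹(ℝ^d), let ψ^l ∈ L²(ℝ^d, ℂ) with ‖ψ^l‖_{L²} = 1 and with essential supremum bound ‖ψ^l‖_{L^∞} ≤ l^{-d/2}, and let ρ^l : ℕ → ℝ be non-increasing, nonnegative and summable with ∑_{i=0}^∞ ρ^l_i ≤ ρ̄. Assume the localization condition: for every fixed i, l^{-d/2} ‖φ^l_i‖_{L¹} → 0 as l → ∞. Then ∑_{i=0}^∞ |⟨φ^l_i, ψ^l⟩_{L²}|² ρ^l_i → 0 as l → ∞. -/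

import Mathlib

open Filter MeasureTheory
open scoped InnerProductSpace ENNReal

set_option maxHeartbeats 1000000 in
/-- Under the localization condition `l^{-d/2} ‖φ^l_i‖_{L¹} → 0`, the kinetic occupation
density `∑' i, |⟨φ^l_i, ψ^l⟩|² ρ^l_i` of a normalized kinetic state `ψ^l` with
`‖ψ^l‖_∞ ≤ l^{-d/2}` vanishes in the thermodynamic limit. -/
theorem tendsto_kinetic_occupation_of_localization
    (d : ℕ) (hd : 1 ≤ d) (ρBar : ℝ) (hρBar : 0 ≤ ρBar)
    (φ : ℕ → ℕ → Lp ℂ 2 (volume : Measure (EuclideanSpace ℝ (Fin d))))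
    (ψ : ℕ → Lp ℂ 2 (volume : Measure (EuclideanSpace ℝ (Fin d))))
    (ρ : ℕ → ℕ → ℝ)
    (hφorth : ∀ l, 1 ≤ l → Orthonormal ℂ (φ l))
    (hφL1 : ∀ l, 1 ≤ l → ∀ i, MemLp (φ l i : EuclideanSpace ℝ (Fin d) → ℂ) 1 volume)
    (hψnorm : ∀ l, 1 ≤ l → ‖ψ l‖ = 1)
    (hψbound : ∀ l, 1 ≤ l →
      ∀ᵐ x : EuclideanSpace ℝ (Fin d), ‖(ψ l : EuclideanSpace ℝ (Fin d) → ℂ) x‖ ≤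
        (l : ℝ) ^ (-(d : ℝ) / 2))
    (hmono : ∀ l, 1 ≤ l → Antitone (ρ l)) (hnonneg : ∀ l, 1 ≤ l → ∀ i, 0 ≤ ρ l i)
    (hsumm : ∀ l, 1 ≤ l → Summable (ρ l)) (hsum : ∀ l, 1 ≤ l → ∑' i, ρ l i ≤ ρBar)
    (hloc : ∀ i, Tendsto
      (fun l : ℕ => (l : ℝ) ^ (-(d : ℝ) / 2) *
        ∫ x : EuclideanSpace ℝ (Fin d), ‖(φ l i : EuclideanSpace ℝ (Fin d) → ℂ) x‖)
      atTop (nhds 0)) :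
    Tendsto (fun l : ℕ => ∑' i : ℕ, ‖⟪φ l i, ψ l⟫_ℂ‖ ^ 2 * ρ l i) atTop (nhds 0) := by
  -- Lemma A: inner product bound
  have hA : ∀ l, 1 ≤ l → ∀ i, ‖⟪φ l i, ψ l⟫_ℂ‖ ≤
      (l : ℝ) ^ (-(d : ℝ) / 2) *
        ∫ x : EuclideanSpace ℝ (Fin d), ‖(φ l i : EuclideanSpace ℝ (Fin d) → ℂ) x‖ := by
    intro l hl i
    rw [MeasureTheory.L2.inner_def]
    have hint : Integrable (fun x : EuclideanSpace ℝ (Fin d) =>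
        (l : ℝ) ^ (-(d : ℝ) / 2) * ‖(φ l i : EuclideanSpace ℝ (Fin d) → ℂ) x‖) volume :=
      ((memLp_one_iff_integrable.mp (hφL1 l hl i)).norm).const_mul _
    calc ‖∫ x, ⟪(φ l i : EuclideanSpace ℝ (Fin d) → ℂ) x,
            (ψ l : EuclideanSpace ℝ (Fin d) → ℂ) x⟫_ℂ‖
        ≤ ∫ x, ‖⟪(φ l i : EuclideanSpace ℝ (Fin d) → ℂ) x,
            (ψ l : EuclideanSpace ℝ (Fin d) → ℂ) x⟫_ℂ‖ := norm_integral_le_integral_norm _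
      _ ≤ ∫ x, (l : ℝ) ^ (-(d : ℝ) / 2) * ‖(φ l i : EuclideanSpace ℝ (Fin d) → ℂ) x‖ := by
          refine integral_mono_of_nonneg (Eventually.of_forall fun x => norm_nonneg _) hint ?_
          filter_upwards [hψbound l hl] with x hx
          calc ‖⟪(φ l i : EuclideanSpace ℝ (Fin d) → ℂ) x,
                  (ψ l : EuclideanSpace ℝ (Fin d) → ℂ) x⟫_ℂ‖
              ≤ ‖(φ l i : EuclideanSpace ℝ (Fin d) → ℂ) x‖ *
                ‖(ψ l : EuclideanSpace ℝ (Fin d) → ℂ) x‖ := norm_inner_le_norm _ _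
            _ ≤ ‖(φ l i : EuclideanSpace ℝ (Fin d) → ℂ) x‖ * ((l : ℝ) ^ (-(d : ℝ) / 2)) :=
                mul_le_mul_of_nonneg_left hx (norm_nonneg _)
            _ = (l : ℝ) ^ (-(d : ℝ) / 2) * ‖(φ l i : EuclideanSpace ℝ (Fin d) → ℂ) x‖ :=
                mul_comm _ _
      _ = (l : ℝ) ^ (-(d : ℝ) / 2) *
            ∫ x, ‖(φ l i : EuclideanSpace ℝ (Fin d) → ℂ) x‖ := integral_const_mul _ _
  -- Bessel
  have hBsumm : ∀ l, 1 ≤ l → Summable (fun i => ‖⟪φ l i, ψ l⟫_ℂ‖ ^ 2) :=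
    fun l hl => (hφorth l hl).inner_products_summable _
  have hB : ∀ l, 1 ≤ l → ∑' i, ‖⟪φ l i, ψ l⟫_ℂ‖ ^ 2 ≤ 1 := by
    intro l hl
    have := (hφorth l hl).tsum_inner_products_le (ψ l)
    rwa [hψnorm l hl, one_pow] at this
  -- pointwise bound on ρ : ρ l i ≤ ρBar / (i+1)
  have hρb : ∀ l, 1 ≤ l → ∀ i, ρ l i ≤ ρBar / (i + 1) := by
    intro l hl i
    rw [le_div_iff₀ (by positivity)]
    calc ρ l i * ((i : ℝ) + 1) = ∑ j ∈ Finset.range (i + 1), ρ l i := by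
          simp [mul_comm]
      _ ≤ ∑ j ∈ Finset.range (i + 1), ρ l j := by
          refine Finset.sum_le_sum fun j hj => hmono l hl ?_
          exact Nat.lt_succ_iff.mp (Finset.mem_range.mp hj)
      _ ≤ ∑' j, ρ l j := Summable.sum_le_tsum _ (fun j _ => hnonneg l hl j) (hsumm l hl)
      _ ≤ ρBar := hsum l hl
  have hρbar : ∀ l, 1 ≤ l → ∀ i, ρ l i ≤ ρBar := by
    intro l hl i
    calc ρ l i ≤ ∑' j, ρ l j := Summable.le_tsum (hsumm l hl) i (fun j _ => hnonneg l hl j)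
      _ ≤ ρBar := hsum l hl
  -- summability of the full series
  have hSsumm : ∀ l, 1 ≤ l → Summable (fun i => ‖⟪φ l i, ψ l⟫_ℂ‖ ^ 2 * ρ l i) := by
    intro l hl
    refine Summable.of_nonneg_of_le (fun i => mul_nonneg (by positivity) (hnonneg l hl i)) (fun i => ?_)
      ((hBsumm l hl).mul_right ρBar)
    exact mul_le_mul_of_nonneg_left (hρbar l hl i) (by positivity)
  rw [Metric.tendsto_atTop]
  intro ε hε
  -- choose N with ρBar / (N+1) < ε/2
  obtain ⟨N, hN⟩ : ∃ N : ℕ, ρBar / ((N : ℝ) + 1) < ε / 2 := by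
    obtain ⟨N, hN⟩ := exists_nat_gt (ρBar / (ε / 2))
    refine ⟨N, ?_⟩
    rw [div_lt_iff₀ (by positivity)]
    rw [div_lt_iff₀ (by positivity)] at hN
    nlinarith [hN]
  -- head tends to 0
  have hhead : Tendsto (fun l : ℕ => ∑ i ∈ Finset.range N, ‖⟪φ l i, ψ l⟫_ℂ‖ ^ 2 * ρ l i)
      atTop (nhds 0) := by
    have : Tendsto (fun l : ℕ => ∑ i ∈ Finset.range N,
        ((l : ℝ) ^ (-(d : ℝ) / 2) *
          ∫ x : EuclideanSpace ℝ (Fin d), ‖(φ l i : EuclideanSpace ℝ (Fin d) → ℂ) x‖) ^ 2 * ρBar)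
        atTop (nhds 0) := by
      have h0 : (0 : ℝ) = ∑ i ∈ Finset.range N, (0 : ℝ) ^ 2 * ρBar := by simp
      rw [h0]
      exact tendsto_finset_sum _ fun i _ => (((hloc i).pow 2).mul_const ρBar)
    refine squeeze_zero' ?_ ?_ this
    · filter_upwards [eventually_ge_atTop 1] with l hl
      exact Finset.sum_nonneg fun i _ => mul_nonneg (by positivity) (hnonneg l hl i)
    · filter_upwards [eventually_ge_atTop 1] with l hl
      refine Finset.sum_le_sum fun i _ => ?_
      refine mul_le_mul ?_ (hρbar l hl i) (hnonneg l hl i) (by positivity)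
      exact pow_le_pow_left₀ (norm_nonneg _) (hA l hl i) 2
    done
  rw [Metric.tendsto_atTop] at hhead
  obtain ⟨L, hL⟩ := hhead (ε / 2) (by positivity)
  refine ⟨max L 1, fun l hl => ?_⟩
  have hl1 : 1 ≤ l := le_trans (le_max_right L 1) hl
  have hlL : L ≤ l := le_trans (le_max_left L 1) hl
  have hsplit : ∑' i, ‖⟪φ l i, ψ l⟫_ℂ‖ ^ 2 * ρ l i =
      (∑ i ∈ Finset.range N, ‖⟪φ l i, ψ l⟫_ℂ‖ ^ 2 * ρ l i) +
      ∑' i, ‖⟪φ l (i + N), ψ l⟫_ℂ‖ ^ 2 * ρ l (i + N) :=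
    (Summable.sum_add_tsum_nat_add N (hSsumm l hl1)).symm
  have htailsumm : Summable (fun i => ‖⟪φ l (i + N), ψ l⟫_ℂ‖ ^ 2 * ρ l (i + N)) :=
    (summable_nat_add_iff N).mpr (hSsumm l hl1)
  have htail : ∑' i, ‖⟪φ l (i + N), ψ l⟫_ℂ‖ ^ 2 * ρ l (i + N) ≤ ρBar / ((N : ℝ) + 1) := by
    calc ∑' i, ‖⟪φ l (i + N), ψ l⟫_ℂ‖ ^ 2 * ρ l (i + N)
        ≤ ∑' i, ‖⟪φ l (i + N), ψ l⟫_ℂ‖ ^ 2 * (ρBar / ((N : ℝ) + 1)) := by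
          refine Summable.tsum_le_tsum (fun i => ?_) htailsumm
            (((summable_nat_add_iff N).mpr (hBsumm l hl1)).mul_right _)
          refine mul_le_mul_of_nonneg_left ?_ (by positivity)
          calc ρ l (i + N) ≤ ρ l N := hmono l hl1 (Nat.le_add_left N i)
            _ ≤ ρBar / ((N : ℝ) + 1) := by
                have := hρb l hl1 N
                simpa using this
      _ = (∑' i, ‖⟪φ l (i + N), ψ l⟫_ℂ‖ ^ 2) * (ρBar / ((N : ℝ) + 1)) := by
          rw [tsum_mul_right]
      _ ≤ 1 * (ρBar / ((N : ℝ) + 1)) := by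
          refine mul_le_mul_of_nonneg_right ?_ (by positivity)
          calc ∑' i, ‖⟪φ l (i + N), ψ l⟫_ℂ‖ ^ 2
              ≤ ∑' i, ‖⟪φ l i, ψ l⟫_ℂ‖ ^ 2 := by
                refine Summable.tsum_le_tsum_of_inj (fun i => i + N) (add_left_injective N)
                  (fun c _ => by positivity) (fun i => le_rfl)
                  ((summable_nat_add_iff N).mpr (hBsumm l hl1)) (hBsumm l hl1)
            _ ≤ 1 := hB l hl1
      _ = ρBar / ((N : ℝ) + 1) := one_mul _
  have hheadb := hL l hlL
  rw [Real.dist_eq, sub_zero] at hheadb ⊢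
  have hheadnn : 0 ≤ ∑ i ∈ Finset.range N, ‖⟪φ l i, ψ l⟫_ℂ‖ ^ 2 * ρ l i :=
    Finset.sum_nonneg fun i _ => mul_nonneg (by positivity) (hnonneg l hl1 i)
  have htailnn : 0 ≤ ∑' i, ‖⟪φ l (i + N), ψ l⟫_ℂ‖ ^ 2 * ρ l (i + N) :=
    tsum_nonneg fun i => mul_nonneg (by positivity) (hnonneg l hl1 _)
  rw [abs_of_nonneg hheadnn] at hheadb
  rw [hsplit, abs_of_nonneg (add_nonneg hheadnn htailnn)]
  calc _ < ε / 2 + (ρBar / ((N : ℝ) + 1)) := by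
        exact add_lt_add_of_lt_of_le hheadb htail
    _ < ε / 2 + ε / 2 := by linarith
    _ = ε := by ring
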